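/- Let a and b be coprime positive integers and let n be a positive integer. Then the number of pairs (x, y) of nonnegative integers with ax + by = n equals either ⌊n/(ab)⌋ or ⌊n/(ab)⌋ + 1. -/

import Mathlib

theorem stmt_4 (a b n : ℕ) (ha : 0 < a) (hb : 0 < b) (hab : Nat.Coprime a b)
    (hn : 0 < n) :
    Nat.card {p : ℕ × ℕ // a * p.1 + b * p.2 = n} = n / (a * b) ∨
    Nat.card {p : ℕ × ℕ // a * p.1 + b * p.2 = n} = n / (a * b) + 1 := by
  -- obtain r < b with a * r ≡ n [MOD b]
  obtain ⟨r, hrb, hrm⟩ : ∃ r, r < b ∧ a * r ≡ n [MOD b] := by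
    rcases eq_or_lt_of_le (show 1 ≤ b from hb) with h1 | h1
    · exact ⟨0, by omega, by simp [Nat.ModEq, ← h1, Nat.mod_one]⟩
    · obtain ⟨c, -, hc⟩ := Nat.exists_mul_mod_eq_one_of_coprime hab h1
      refine ⟨c * n % b, Nat.mod_lt _ hb, ?_⟩
      have h2 : a * c ≡ 1 [MOD b] := by
        unfold Nat.ModEq; rw [hc, Nat.mod_eq_of_lt h1]
      calc a * (c * n % b) ≡ a * (c * n) [MOD b] :=
            ((Nat.mod_modEq (c * n) b).mul_left a)
        _ = (a * c) * n := by ring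
        _ ≡ 1 * n [MOD b] := h2.mul_right n
        _ = n := by ring
  -- key fact: any solution has p.1 ≡ r mod b hence r ≤ p.1
  have hsol : ∀ x y : ℕ, a * x + b * y = n → x % b = r ∧ r ≤ x := by
    intro x y hxy
    have h1 : a * x ≡ a * r [MOD b] := by
      have h0 : a * x ≡ n [MOD b] := by
        have h3 : (a * x + b * y) % b = (a * x) % b := by
          simp [Nat.add_mul_mod_self_left]
        unfold Nat.ModEq; rw [← hxy, h3]
      exact h0.trans hrm.symm
    have h2 : x ≡ r [MOD b] := Nat.ModEq.cancel_left_of_coprime hab.symm h1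
    have h3 : x % b = r := by
      have h4 := h2.symm
      unfold Nat.ModEq at h4
      rw [Nat.mod_eq_of_lt hrb] at h4
      omega
    exact ⟨h3, h3 ▸ Nat.mod_le x b⟩
  by_cases hcase : a * r ≤ n
  · -- solutions exist; count = (n/a - r)/b + 1
    set K := (n / a - r) / b + 1 with hK
    have hra : r ≤ n / a := (Nat.le_div_iff_mul_le ha).mpr (by linarith [hcase, Nat.mul_comm a r])
    have hdvd : b ∣ n - a * r := (Nat.modEq_iff_dvd' hcase).mp hrm
    have hcard : Nat.card {p : ℕ × ℕ // a * p.1 + b * p.2 = n} = K := by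
      apply Nat.card_eq_of_equiv_fin
      refine Equiv.symm ⟨fun k => ⟨(r + b * k, (n - a * r) / b - a * k), ?_⟩,
        fun p => ⟨(p.1.1 - r) / b, ?_⟩, ?_, ?_⟩
      · -- well-defined
        obtain ⟨k, hk⟩ := k
        have hkK : b * k ≤ n / a - r := by
          have h5 : k ≤ (n / a - r) / b := by omega
          calc b * k ≤ b * ((n / a - r) / b) := Nat.mul_le_mul_left _ h5
            _ ≤ n / a - r := Nat.mul_div_le _ _
        have hxn : a * (r + b * k) ≤ n := by
          have h5 : r + b * k ≤ n / a := by omega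
          calc a * (r + b * k) ≤ a * (n / a) := Nat.mul_le_mul_left _ h5
            _ ≤ n := Nat.mul_div_le _ _
        obtain ⟨m, hm⟩ := hdvd
        have hmval : (n - a * r) / b = m := by rw [hm]; exact Nat.mul_div_cancel_left _ hb
        simp only [hmval]
        have e3 : a * (r + b * k) = a * r + b * (a * k) := by ring
        have hak : a * k ≤ m := by
          by_contra hco
          push_neg at hco
          have h6 : b * m < b * (a * k) := (Nat.mul_lt_mul_left hb).mpr hco
          omega
        have e4 : b * (m - a * k) + b * (a * k) = b * m := by
          rw [← Nat.mul_add]; congr 1; omega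
        show a * (r + b * k) + b * (m - a * k) = n
        omega
      · -- inverse well-defined: (p.1 - r)/b < K
        obtain ⟨⟨x, y⟩, hxy⟩ := p
        have hxy' : a * x + b * y = n := hxy
        obtain ⟨hxr, hrx⟩ := hsol x y hxy'
        have hxa : a * x ≤ n := by omega
        have hxna : x ≤ n / a := (Nat.le_div_iff_mul_le ha).mpr (by linarith [Nat.mul_comm a x])
        simp only
        have h5 : (x - r) / b ≤ (n / a - r) / b := Nat.div_le_div_right (by omega)
        omega
      · -- left inverse
        rintro ⟨k, hk⟩
        ext
        show (r + b * k - r) / b = k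
        rw [Nat.add_sub_cancel_left]
        exact Nat.mul_div_cancel_left _ hb
      · -- right inverse
        rintro ⟨⟨x, y⟩, hxy⟩
        have hxy' : a * x + b * y = n := hxy
        obtain ⟨hxr, hrx⟩ := hsol x y hxy'
        have hbd : b ∣ x - r := by
          have h5 : x % b = r % b := by rw [hxr, Nat.mod_eq_of_lt hrb]
          exact (Nat.modEq_iff_dvd' hrx).mp h5.symm
        obtain ⟨j, hj⟩ := hbd
        have hx : x = r + b * j := by omega
        have hjk : (x - r) / b = j := by rw [hj, Nat.mul_div_cancel_left _ hb]
        have hyval : (n - a * r) / b - a * ((x - r) / b) = y := by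
          rw [hjk]
          have h1 : n - a * r = a * b * j + b * y := by
            rw [← hxy', hx]; ring_nf; omega
          rw [h1]
          have h2 : (a * b * j + b * y) / b = a * j + y := by
            rw [show a * b * j + b * y = b * (a * j + y) by ring,
              Nat.mul_div_cancel_left _ hb]
          rw [h2]; omega
        apply Subtype.ext
        apply Prod.ext
        · show r + b * ((x - r) / b) = x
          rw [hjk]; omega
        · exact hyval
    rw [hcard, hK]
    -- now show (n/a - r)/b + 1 = n/(a*b) or n/(a*b)+1
    set q := n / (a * b) with hq
    have hub : (n / a - r) / b ≤ q := by
      calc (n / a - r) / b ≤ (n / a) / b := Nat.div_le_div_right (by omega)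
        _ = q := by rw [hq, Nat.div_div_eq_div_mul]
    have h1 : q * (a * b) ≤ n := Nat.div_mul_le_self n (a * b)
    have h2 : q * b ≤ n / a := by
      apply (Nat.le_div_iff_mul_le ha).mpr
      calc q * b * a = q * (a * b) := by ring
        _ ≤ n := h1
    have h3 : (q - 1) * b ≤ n / a - r := by
      have e : (q - 1) * b = q * b - b := by rw [tsub_mul, one_mul]
      omega
    have h4 : q - 1 ≤ (n / a - r) / b := (Nat.le_div_iff_mul_le hb).mpr h3
    omega
  · -- no solutions: set is empty; show n/(a*b) = 0
    push_neg at hcase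
    have hempty : IsEmpty {p : ℕ × ℕ // a * p.1 + b * p.2 = n} := by
      constructor
      rintro ⟨⟨x, y⟩, hxy⟩
      have hxy' : a * x + b * y = n := hxy
      obtain ⟨_, hrx⟩ := hsol x y hxy'
      have h5 : a * r ≤ a * x := Nat.mul_le_mul_left a hrx
      omega
    have hlt : n < a * b := by
      by_contra h
      push_neg at h
      have h1 : a * r ≤ a * (b - 1) := Nat.mul_le_mul_left a (by omega)
      have h2 : a * (b - 1) + a = a * b := by rw [← Nat.mul_succ]; congr 1; omega
      omega
    left
    rw [Nat.card_of_isEmpty, Nat.div_eq_of_lt hlt]
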